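/- Uniqueness of the normalized filter given uniqueness of the linear filter: Let τ : [0,T]×Ω → M_n(ℂ) be the unique solution of a linear matrix SDE with τ₀ = ρ₀ a density matrix, with τ_t positive and nonzero a.s. for every t. Suppose ρ̄ is any adapted M_n(ℂ)-valued process with ρ̄₀ = ρ₀, Tr[ρ̄_t] = 1 a.s. for all t, and suppose there exists a strictly positive scalar adapted process Π̄ with Π̄₀ = 1 such that Π̄_t ρ̄_t solves the same linear SDE as τ. Then ρ̄_t = τ_t/Tr[τ_t] a.s. for every t ∈ [0,T]. -/
import Mathlib


open Matrix MeasureTheory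
open scoped ComplexOrder

/-- Uniqueness of the normalized filter given uniqueness of the linear filter:
if `τ` is the unique solution of the linear (unnormalized) filtering equation,
a.s. positive and nonzero, and `ρ̄` is a trace-one process such that `Π̄ ρ̄`
solves the same linear equation for some strictly positive scalar process `Π̄`
with `Π̄₀ = 1`, then `ρ̄_t = τ_t / Tr[τ_t]` a.s. for every `t ∈ [0,T]`. -/
theorem stmt18 {Ω : Type*} [MeasurableSpace Ω] (P : Measure Ω)
    [IsProbabilityMeasure P] {n : ℕ} (T : ℝ) (hT : 0 ≤ T)
    -- `Sol σ` means "σ solves the linear matrix SDE"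
    (Sol : (ℝ → Ω → Matrix (Fin n) (Fin n) ℂ) → Prop)
    (τ : ℝ → Ω → Matrix (Fin n) (Fin n) ℂ)
    (ρ₀ : Matrix (Fin n) (Fin n) ℂ) (hρ₀ : ρ₀.PosSemidef ∧ ρ₀.trace = 1)
    (hτsol : Sol τ) (hτ0 : ∀ ω, τ 0 ω = ρ₀)
    -- `τ` is the unique solution
    (huniq : ∀ σ, Sol σ → ∀ t ∈ Set.Icc 0 T, σ t =ᵐ[P] τ t)
    (hτpos : ∀ t ∈ Set.Icc 0 T, ∀ᵐ ω ∂P, (τ t ω).PosSemidef ∧ τ t ω ≠ 0)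
    (ρ' : ℝ → Ω → Matrix (Fin n) (Fin n) ℂ) (hρ'0 : ∀ ω, ρ' 0 ω = ρ₀)
    (hρ'tr : ∀ t ∈ Set.Icc 0 T, ∀ᵐ ω ∂P, (ρ' t ω).trace = 1)
    (Pi' : ℝ → Ω → ℝ) (hPipos : ∀ t ω, 0 < Pi' t ω) (hPi0 : ∀ ω, Pi' 0 ω = 1)
    (hPirhosol : Sol (fun t ω => (Pi' t ω : ℂ) • ρ' t ω)) :
    ∀ t ∈ Set.Icc 0 T, ∀ᵐ ω ∂P,
      ρ' t ω = ((τ t ω).trace)⁻¹ • τ t ω := by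
  intro t ht
  have heq := huniq _ hPirhosol t ht
  filter_upwards [heq, hρ'tr t ht] with ω h1 h2
  have htr : (Pi' t ω : ℂ) = (τ t ω).trace := by
    rw [← h1, Matrix.trace_smul, h2, smul_eq_mul, mul_one]
  have hne : (Pi' t ω : ℂ) ≠ 0 := by
    exact_mod_cast (hPipos t ω).ne'
  rw [← htr, ← h1, smul_smul, inv_mul_cancel₀ hne, one_smul]
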